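/- Let (Ω, 𝓕, P) be a probability space, let p > 2 be real, and let U, U′, V, V′ be real random variables with E[|U|^p] < ∞, E[|U′|^p] < ∞, E[|V|^p] < ∞ and E[|V′|^p] < ∞. Let A, B ∈ 𝓕 be events with U·1_{Aᶜ} = U′·1_{Aᶜ} almost surely and V·1_{Bᶜ} = V′·1_{Bᶜ} almost surely. Then |E[(U − U′)·(V − V′)]| ≤ (‖U‖_p + ‖U′‖_p) · (‖V‖_p + ‖V′‖_p) · P(A)^{1/2 − 1/p} · P(B)^{1/2 − 1/p}. -/

import Mathlib

set_option maxHeartbeats 800000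


open MeasureTheory ProbabilityTheory
open scoped ENNReal

private lemma aux_memLp {Ω : Type*} [MeasureSpace Ω] {p : ℝ} (hp : 0 < p)
    {U : Ω → ℝ} (hU : Measurable U) (hUp : Integrable (fun ω => |U ω| ^ p)) :
    MemLp U (ENNReal.ofReal p) ℙ := by
  have h0 : (ENNReal.ofReal p) ≠ 0 := by
    simp [ENNReal.ofReal_eq_zero, not_le, hp]
  have htop : (ENNReal.ofReal p) ≠ ∞ := ENNReal.ofReal_ne_top
  rw [← memLp_norm_rpow_iff hU.aestronglyMeasurable h0 htop]
  rw [ENNReal.div_self h0 htop, memLp_one_iff_integrable]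
  simpa [ENNReal.toReal_ofReal hp.le, Real.norm_eq_abs] using hUp

private lemma aux_eLpNorm_toReal {Ω : Type*} [MeasureSpace Ω] {p : ℝ} (hp : 0 < p)
    {U : Ω → ℝ} (hU : MemLp U (ENNReal.ofReal p) ℙ) :
    (eLpNorm U (ENNReal.ofReal p) ℙ).toReal = (∫ ω, |U ω| ^ p) ^ (1 / p) := by
  have h0 : (ENNReal.ofReal p) ≠ 0 := by
    simp [ENNReal.ofReal_eq_zero, not_le, hp]
  rw [hU.eLpNorm_eq_integral_rpow_norm h0 ENNReal.ofReal_ne_top]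
  rw [ENNReal.toReal_ofReal]
  · simp [ENNReal.toReal_ofReal hp.le, Real.norm_eq_abs, one_div]
  · positivity

/-- the two-event estimate used in Lemmas 6.1 and 6.2. -/
theorem difference_correlation_bound_two_events {Ω : Type*} [MeasureSpace Ω]
    [IsProbabilityMeasure (ℙ : Measure Ω)]
    (p : ℝ) (hp : 2 < p)
    (U U' V V' : Ω → ℝ)
    (hU : Measurable U) (hU' : Measurable U')
    (hV : Measurable V) (hV' : Measurable V')
    (hUp : Integrable (fun ω => |U ω| ^ p))
    (hU'p : Integrable (fun ω => |U' ω| ^ p))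
    (hVp : Integrable (fun ω => |V ω| ^ p))
    (hV'p : Integrable (fun ω => |V' ω| ^ p))
    (A B : Set Ω) (hA : MeasurableSet A) (hB : MeasurableSet B)
    (heqU : (fun ω => U ω * Aᶜ.indicator (fun _ => (1 : ℝ)) ω)
        =ᵐ[ℙ] fun ω => U' ω * Aᶜ.indicator (fun _ => (1 : ℝ)) ω)
    (heqV : (fun ω => V ω * Bᶜ.indicator (fun _ => (1 : ℝ)) ω)
        =ᵐ[ℙ] fun ω => V' ω * Bᶜ.indicator (fun _ => (1 : ℝ)) ω) :
    |∫ ω, (U ω - U' ω) * (V ω - V' ω)| ≤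
      ((∫ ω, |U ω| ^ p) ^ (1 / p) + (∫ ω, |U' ω| ^ p) ^ (1 / p))
        * ((∫ ω, |V ω| ^ p) ^ (1 / p) + (∫ ω, |V' ω| ^ p) ^ (1 / p))
        * (ℙ A).toReal ^ (1 / 2 - 1 / p) * (ℙ B).toReal ^ (1 / 2 - 1 / p) := by
  have hp0 : (0 : ℝ) < p := by linarith
  set pE : ℝ≥0∞ := ENNReal.ofReal p with hpE
  have hpE0 : pE ≠ 0 := by simp [hpE, ENNReal.ofReal_eq_zero, not_le, hp0]
  have hpEtop : pE ≠ ∞ := ENNReal.ofReal_ne_top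
  have hpEreal : pE.toReal = p := ENNReal.toReal_ofReal hp0.le
  have h2pE : (2 : ℝ≥0∞) ≤ pE := by
    rw [hpE, show (2 : ℝ≥0∞) = ENNReal.ofReal 2 by norm_num]
    exact ENNReal.ofReal_le_ofReal hp.le
  -- MemLp facts
  have hUm := aux_memLp hp0 hU hUp
  have hU'm := aux_memLp hp0 hU' hU'p
  have hVm := aux_memLp hp0 hV hVp
  have hV'm := aux_memLp hp0 hV' hV'p
  set ΔU : Ω → ℝ := fun ω => U ω - U' ω with hΔU
  set ΔV : Ω → ℝ := fun ω => V ω - V' ω with hΔV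
  have hΔUm : MemLp ΔU pE ℙ := hUm.sub hU'm
  have hΔVm : MemLp ΔV pE ℙ := hVm.sub hV'm
  set f : Ω → ℝ := A.indicator ΔU with hf
  set g : Ω → ℝ := B.indicator ΔV with hg
  have hfm : MemLp f pE ℙ := hΔUm.indicator hA
  have hgm : MemLp g pE ℙ := hΔVm.indicator hB
  -- ΔU = f a.e.
  have heqf : ΔU =ᵐ[ℙ] f := by
    filter_upwards [heqU] with ω hω
    by_cases hωA : ω ∈ A
    · simp [hf, Set.indicator_of_mem hωA]
    · have : U ω = U' ω := by
        simpa [Set.indicator_of_mem (Set.mem_compl hωA)] using hω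
      simp [hf, Set.indicator_of_notMem hωA, hΔU, this]
  have heqg : ΔV =ᵐ[ℙ] g := by
    filter_upwards [heqV] with ω hω
    by_cases hωB : ω ∈ B
    · simp [hg, Set.indicator_of_mem hωB]
    · have : V ω = V' ω := by
        simpa [Set.indicator_of_mem (Set.mem_compl hωB)] using hω
      simp [hg, Set.indicator_of_notMem hωB, hΔV, this]
  -- L2 memberships
  have h2 : (2 : ℝ≥0∞) = ENNReal.ofReal (2 : ℝ) := by norm_num
  have hf2 : MemLp f 2 ℙ := hfm.mono_exponent h2pE
  have hg2 : MemLp g 2 ℙ := hgm.mono_exponent h2pE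
  -- Step 1: Cauchy–Schwarz
  have hstep1 : |∫ ω, (U ω - U' ω) * (V ω - V' ω)| ≤
      (eLpNorm f 2 ℙ).toReal * (eLpNorm g 2 ℙ).toReal := by
    have hint : (fun ω => (U ω - U' ω) * (V ω - V' ω)) =ᵐ[ℙ] fun ω => f ω * g ω := by
      filter_upwards [heqf, heqg] with ω h1 h2
      simp only [hΔU, hΔV] at h1 h2
      rw [h1, h2]
    rw [integral_congr_ae hint]
    have := norm_integral_le_integral_norm (μ := (ℙ : Measure Ω)) (fun ω => f ω * g ω)
    rw [Real.norm_eq_abs] at this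
    refine this.trans ?_
    have hconj : Real.HolderConjugate 2 2 := by constructor <;> norm_num
    have hCS := integral_mul_norm_le_Lp_mul_Lq (μ := (ℙ : Measure Ω)) hconj
      (h2 ▸ hf2) (h2 ▸ hg2)
    have hnorm : (fun ω => ‖f ω * g ω‖) = fun ω => ‖f ω‖ * ‖g ω‖ := by
      funext ω; exact norm_mul _ _
    rw [hnorm]
    refine hCS.trans (le_of_eq ?_)
    have e2 : (2 : ℝ≥0∞).toReal = (2 : ℝ) := by norm_num
    rw [hf2.eLpNorm_eq_integral_rpow_norm two_ne_zero ENNReal.ofNat_ne_top,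
      hg2.eLpNorm_eq_integral_rpow_norm two_ne_zero ENNReal.ofNat_ne_top]
    rw [ENNReal.toReal_ofReal (by positivity), ENNReal.toReal_ofReal (by positivity)]
    rw [e2]
    norm_num
  refine hstep1.trans ?_
  -- Step 2: bound eLpNorm f 2
  have key : ∀ (W : Ω → ℝ) (S : Set Ω), MeasurableSet S → MemLp W pE ℙ →
      eLpNorm (S.indicator W) 2 ℙ ≤ eLpNorm W pE ℙ * (ℙ S) ^ (1 / 2 - 1 / p) := by
    intro W S hS hW
    rw [eLpNorm_indicator_eq_eLpNorm_restrict hS]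
    have h1 : eLpNorm W 2 ((ℙ : Measure Ω).restrict S) ≤
        eLpNorm W pE ((ℙ : Measure Ω).restrict S) * (((ℙ : Measure Ω).restrict S) Set.univ) ^ (1 / (2:ℝ≥0∞).toReal - 1 / pE.toReal) :=
      eLpNorm_le_eLpNorm_mul_rpow_measure_univ h2pE
        (hW.aestronglyMeasurable.restrict)
    have h2' : ((ℙ : Measure Ω).restrict S) Set.univ = ℙ S := by
      rw [Measure.restrict_apply_univ]
    have h3 : eLpNorm W pE ((ℙ : Measure Ω).restrict S) ≤ eLpNorm W pE ℙ :=
      eLpNorm_mono_measure W Measure.restrict_le_self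
    have e2 : (1 / (2:ℝ≥0∞).toReal - 1 / pE.toReal) = 1 / 2 - 1 / p := by
      rw [hpEreal]; norm_num
    calc eLpNorm W 2 ((ℙ : Measure Ω).restrict S)
        ≤ eLpNorm W pE ((ℙ : Measure Ω).restrict S) * (((ℙ : Measure Ω).restrict S) Set.univ) ^ (1 / (2:ℝ≥0∞).toReal - 1 / pE.toReal) := h1
      _ ≤ eLpNorm W pE ℙ * (ℙ S) ^ (1 / 2 - 1 / p) := by
          rw [h2', e2]
          exact mul_le_mul_left h3 _
  have hfbound : eLpNorm f 2 ℙ ≤ (eLpNorm U pE ℙ + eLpNorm U' pE ℙ) * (ℙ A) ^ (1 / 2 - 1 / p) := by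
    refine (key ΔU A hA hΔUm).trans ?_
    gcongr
    exact eLpNorm_sub_le hUm.aestronglyMeasurable hU'm.aestronglyMeasurable
      (le_trans (by norm_num) h2pE)
  have hgbound : eLpNorm g 2 ℙ ≤ (eLpNorm V pE ℙ + eLpNorm V' pE ℙ) * (ℙ B) ^ (1 / 2 - 1 / p) := by
    refine (key ΔV B hB hΔVm).trans ?_
    gcongr
    exact eLpNorm_sub_le hVm.aestronglyMeasurable hV'm.aestronglyMeasurable
      (le_trans (by norm_num) h2pE)
  -- finiteness
  have hexp : (0:ℝ) ≤ 1 / 2 - 1 / p := by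
    rw [sub_nonneg]
    exact one_div_le_one_div_of_le (by norm_num) hp.le
  have hAfin : (ℙ A) ^ (1 / 2 - 1 / p) ≠ ∞ :=
    (ENNReal.rpow_lt_top_of_nonneg hexp (measure_ne_top _ _)).ne
  have hBfin : (ℙ B) ^ (1 / 2 - 1 / p) ≠ ∞ :=
    (ENNReal.rpow_lt_top_of_nonneg hexp (measure_ne_top _ _)).ne
  have hRHSfin : (eLpNorm U pE ℙ + eLpNorm U' pE ℙ) * (ℙ A) ^ (1 / 2 - 1 / p) ≠ ∞ :=
    ENNReal.mul_ne_top (ENNReal.add_ne_top.2 ⟨hUm.eLpNorm_ne_top, hU'm.eLpNorm_ne_top⟩) hAfin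
  have hRHSfin' : (eLpNorm V pE ℙ + eLpNorm V' pE ℙ) * (ℙ B) ^ (1 / 2 - 1 / p) ≠ ∞ :=
    ENNReal.mul_ne_top (ENNReal.add_ne_top.2 ⟨hVm.eLpNorm_ne_top, hV'm.eLpNorm_ne_top⟩) hBfin
  have hmul : (eLpNorm f 2 ℙ).toReal * (eLpNorm g 2 ℙ).toReal ≤
      ((eLpNorm U pE ℙ + eLpNorm U' pE ℙ) * (ℙ A) ^ (1 / 2 - 1 / p)).toReal *
      ((eLpNorm V pE ℙ + eLpNorm V' pE ℙ) * (ℙ B) ^ (1 / 2 - 1 / p)).toReal := by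
    exact mul_le_mul (ENNReal.toReal_mono hRHSfin hfbound)
      (ENNReal.toReal_mono hRHSfin' hgbound) ENNReal.toReal_nonneg ENNReal.toReal_nonneg
  refine hmul.trans (le_of_eq ?_)
  rw [ENNReal.toReal_mul, ENNReal.toReal_mul, ENNReal.toReal_add hUm.eLpNorm_ne_top hU'm.eLpNorm_ne_top,
    ENNReal.toReal_add hVm.eLpNorm_ne_top hV'm.eLpNorm_ne_top,
    ← ENNReal.toReal_rpow, ← ENNReal.toReal_rpow,
    aux_eLpNorm_toReal hp0 hUm, aux_eLpNorm_toReal hp0 hU'm,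
    aux_eLpNorm_toReal hp0 hVm, aux_eLpNorm_toReal hp0 hV'm]
  ring
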